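/- Dynamic stability under thinned specialization: let Λ = M be as in the single-component specialization construction with all blocks U, Z, Y_1,…,Y_y, W_1,…,W_w having nonnegative entries and ρ(Λ) < 1 (intrinsic stability). Let T ⊆ P = {1,…,y}×{1,…,w}, and let Λ̂_T = M̂_T be the thinned specialization of Λ over T, of size N = ℓ + |T|·m. Let X_1, …, X_N be nonempty closed subsets of ℝ, let 𝒴 = {x ∈ ℝ^N : x_i ∈ X_i for all i}, and let G : ℝ^N → ℝ^N map 𝒴 into itself and satisfy |G_i(x) − G_i(y)| ≤ Σ_{j=1}^N (Λ̂_T)_{ij} |x_j − y_j| for all x, y ∈ 𝒴 and all i. Then ρ(Λ̂_T) < 1 and G is globally stable on 𝒴: there exists x* ∈ 𝒴 with G(x*) = x* such that for every x⁰ ∈ 𝒴 the iterates G^k(x⁰) converge to x*. -/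

import Mathlib

open Matrix

/-- The original block matrix `M = [[U, Y],[W, Z]]` with `Y = ΣY_i`, `W = ΣW_j`. -/
def origMatrix {l m y w : ℕ}
    (U : Matrix (Fin l) (Fin l) ℝ) (Z : Matrix (Fin m) (Fin m) ℝ)
    (Y : Fin y → Matrix (Fin l) (Fin m) ℝ) (W : Fin w → Matrix (Fin m) (Fin l) ℝ) :
    Matrix (Fin l ⊕ Fin m) (Fin l ⊕ Fin m) ℝ :=
  Matrix.fromBlocks U (∑ i, Y i) (∑ j, W j) Z

/-- The thinned specialization `M̂_T` of `M` over a subset `T` of the branch pairs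
`P = {1,…,y} × {1,…,w}`: only the copies of `Z` indexed by `T` are kept. -/
def thinnedSpecialization {l m y w : ℕ}
    (U : Matrix (Fin l) (Fin l) ℝ) (Z : Matrix (Fin m) (Fin m) ℝ)
    (Y : Fin y → Matrix (Fin l) (Fin m) ℝ) (W : Fin w → Matrix (Fin m) (Fin l) ℝ)
    (T : Finset (Fin y × Fin w)) :
    Matrix (Fin l ⊕ (↥T × Fin m)) (Fin l ⊕ (↥T × Fin m)) ℝ :=
  fun r c =>
    match r, c with
    | Sum.inl a, Sum.inl b => U a b
    | Sum.inl a, Sum.inr (p, c') => Y p.1.1 a c'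
    | Sum.inr (p, r'), Sum.inl b => W p.1.2 r' b
    | Sum.inr (p, r'), Sum.inr (q, c') => if p = q then Z r' c' else 0

/-- The spectral radius of a square real matrix: the maximum of `|λ|` over the complex
roots `λ` of its characteristic polynomial (and `0` if there are none). -/
noncomputable def specRad {n : Type*} [Fintype n] [DecidableEq n]
    (A : Matrix n n ℝ) : ℝ :=
  (((Matrix.charpoly (A.map Complex.ofReal)).roots).map (fun z : ℂ => ‖z‖)).fold max 0



section AuxProof

attribute [local instance] Matrix.linftyOpNormedRing Matrix.linftyOpNormedAlgebra
  Matrix.linftyOpNormedAddCommGroup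

lemma mem_le_fold_max (s : Multiset ℝ) (x : ℝ) (hx : x ∈ s) : x ≤ s.fold max 0 := by
  induction s using Multiset.induction with
  | empty => simp at hx
  | cons a t ih =>
    rw [Multiset.fold_cons_left]
    rcases Multiset.mem_cons.mp hx with h | h
    · exact h ▸ le_max_left _ _
    · exact (ih h).trans (le_max_right _ _)

lemma eval_charpoly' {n : Type*} [Fintype n] [DecidableEq n] (A : Matrix n n ℂ) (t : ℂ) :
    (Matrix.charpoly A).eval t = (Matrix.scalar n t - A).det := by
  rw [Matrix.charpoly, ← Polynomial.coe_evalRingHom, RingHom.map_det]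
  congr 1
  ext i j
  by_cases h : i = j <;> simp [charmatrix_apply, diagonal, Matrix.scalar, h, Matrix.one_apply]

section
variable {n : Type*} [Fintype n] [DecidableEq n]

example : CompleteSpace (Matrix n n ℂ) := by infer_instance

lemma specRad_nonneg (A : Matrix n n ℝ) : 0 ≤ specRad A := by
  unfold specRad
  induction (((Matrix.charpoly (A.map Complex.ofReal)).roots).map (fun z : ℂ => ‖z‖)) using
    Multiset.induction with
  | empty => simp
  | cons a t ih => rw [Multiset.fold_cons_left]; exact ih.trans (le_max_right _ _)

lemma spectralRadius_le (A : Matrix n n ℝ) :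
    spectralRadius ℂ (A.map Complex.ofReal) ≤ ENNReal.ofReal (specRad A) := by
  refine iSup₂_le fun t ht => ?_
  have hroot : t ∈ (Matrix.charpoly (A.map Complex.ofReal)).roots := by
    rw [Polynomial.mem_roots (Matrix.charpoly_monic _).ne_zero, Polynomial.IsRoot, eval_charpoly']
    rw [spectrum.mem_iff] at ht
    by_contra hdet
    exact ht ((Matrix.isUnit_iff_isUnit_det _).mpr (Ne.isUnit hdet))
  have : ‖t‖ ≤ specRad A :=
    mem_le_fold_max _ _ (Multiset.mem_map_of_mem _ hroot)
  rw [← enorm_eq_nnnorm, ← ofReal_norm]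
  exact ENNReal.ofReal_le_ofReal this

set_option maxHeartbeats 1000000 in
lemma pow_entry_bound [Nonempty n] (A : Matrix n n ℝ) (h : specRad A < 1) :
    ∃ c : ℝ, 0 < c ∧ c < 1 ∧ ∃ N : ℕ, ∀ k ≥ N, ∀ i j, |(A ^ k) i j| ≤ c ^ k := by
  set c : ℝ := (specRad A + 1) / 2 with hc
  have h0 := specRad_nonneg A
  have hc0 : 0 < c := by positivity
  have hc1 : c < 1 := by simp only [hc]; linarith
  have hsc : specRad A < c := by simp only [hc]; linarith
  refine ⟨c, hc0, hc1, ?_⟩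
  set B := A.map Complex.ofReal with hB
  have hlim : Filter.limsup (fun k : ℕ => (‖B ^ k‖₊ : ENNReal) ^ (1 / k : ℝ)) Filter.atTop
      < ENNReal.ofReal c :=
    lt_of_le_of_lt (spectrum.limsup_pow_nnnorm_pow_one_div_le_spectralRadius B)
      (lt_of_le_of_lt (spectralRadius_le A) (ENNReal.ofReal_lt_ofReal_iff (by linarith)|>.mpr hsc))
  have hev := Filter.eventually_lt_of_limsup_lt hlim
  rw [Filter.eventually_atTop] at hev
  obtain ⟨N, hN⟩ := hev
  refine ⟨N + 1, fun k hk i j => ?_⟩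
  have hk1 : 1 ≤ k := le_trans (Nat.le_add_left 1 N) hk
  have hkN := hN k (le_trans (Nat.le_succ N) hk)
  -- raise to power k
  have hkne : (k:ℝ) ≠ 0 := by exact_mod_cast hk1.trans_lt' Nat.zero_lt_one |>.ne'
  have hpow : (‖B ^ k‖₊ : ENNReal) ≤ ENNReal.ofReal (c ^ k) := by
    have h2 := ENNReal.rpow_le_rpow hkN.le (by positivity : (0:ℝ) ≤ (k:ℝ))
    rw [← ENNReal.rpow_mul, one_div, inv_mul_cancel₀ hkne, ENNReal.rpow_one] at h2
    calc (‖B ^ k‖₊ : ENNReal) ≤ ENNReal.ofReal c ^ (k:ℝ) := h2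
    _ = ENNReal.ofReal (c ^ (k:ℝ)) := by rw [ENNReal.ofReal_rpow_of_pos hc0]
    _ = ENNReal.ofReal (c ^ k) := by rw [Real.rpow_natCast]
  have hnorm : ‖B ^ k‖ ≤ c ^ k := by
    rw [← enorm_eq_nnnorm, ← ofReal_norm] at hpow
    exact (ENNReal.ofReal_le_ofReal_iff (by positivity)).mp hpow
  -- entry bound
  have hentry : ‖(B ^ k) i j‖ ≤ ‖B ^ k‖ := by
    rw [Matrix.linfty_opNorm_def]
    calc ‖(B ^ k) i j‖ ≤ ∑ j', ‖(B ^ k) i j'‖ :=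
      Finset.single_le_sum (fun j' _ => norm_nonneg _) (Finset.mem_univ j)
    _ = ((∑ j', ‖(B ^ k) i j'‖₊ : NNReal) : ℝ) := by push_cast; rfl
    _ ≤ _ := by
        have : (∑ j', ‖(B ^ k) i j'‖₊ : NNReal) ≤ Finset.univ.sup fun i => ∑ j', ‖(B ^ k) i j'‖₊ :=
          Finset.le_sup (f := fun i => ∑ j', ‖(B ^ k) i j'‖₊) (Finset.mem_univ i)
        exact_mod_cast this
  have hBk : B ^ k = (A ^ k).map Complex.ofReal := by
    simp only [hB, ← Complex.coe_algebraMap]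
    exact (RingHom.mapMatrix (algebraMap ℝ ℂ)).map_pow A k |>.symm ▸ rfl
  rw [hBk] at hentry hnorm
  simpa using hentry.trans hnorm
end

lemma pow_entries_nonneg {n : Type*} [Fintype n] [DecidableEq n]
    (A : Matrix n n ℝ) (hA : ∀ i j, 0 ≤ A i j) (k : ℕ) : ∀ i j, 0 ≤ (A ^ k) i j := by
  induction k with
  | zero => intro i j; by_cases h : i = j <;> simp [Matrix.one_apply, h]
  | succ k ih =>
    intro i j
    rw [pow_succ, Matrix.mul_apply]
    exact Finset.sum_nonneg fun j' _ => mul_nonneg (ih i j') (hA j' j)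

set_option maxHeartbeats 1600000 in
lemma exists_subinvariant {n : Type*} [Fintype n] [DecidableEq n] [Nonempty n]
    (A : Matrix n n ℝ) (hA : ∀ i j, 0 ≤ A i j) (h : specRad A < 1) :
    ∃ c : ℝ, 0 < c ∧ c < 1 ∧ ∃ v : n → ℝ, (∀ i, 1 ≤ v i) ∧
      ∀ i, ∑ j, A i j * v j ≤ c * v i := by
  obtain ⟨b, hb0, hb1, N, hN⟩ := pow_entry_bound A h
  obtain ⟨c, hbc, hc1⟩ : ∃ c : ℝ, b < c ∧ c < 1 := ⟨(b + 1) / 2, by linarith, by linarith⟩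
  have hc0 : 0 < c := hb0.trans hbc
  set r : ℕ → n → ℝ := fun k i => ∑ j, (A ^ k) i j with hrdef
  have hrnn : ∀ k i, 0 ≤ r k i := fun k i =>
    Finset.sum_nonneg fun j _ => pow_entries_nonneg A hA k i j
  have hr0 : ∀ i, r 0 i = 1 := by
    intro i; simp [hrdef, Matrix.one_apply]
  have hrsucc : ∀ k i, r (k + 1) i = ∑ j, A i j * r k j := by
    intro k i
    simp only [hrdef, pow_succ', Matrix.mul_apply, Finset.mul_sum]
    rw [Finset.sum_comm]
  have hrb : ∀ k, N ≤ k → ∀ i, r k i ≤ (Fintype.card n) * b ^ k := by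
    intro k hk i
    calc r k i ≤ ∑ _j : n, b ^ k :=
      Finset.sum_le_sum fun j _ => (le_abs_self _).trans (hN k hk i j)
    _ = (Fintype.card n) * b ^ k := by simp [Finset.sum_const, nsmul_eq_mul, Finset.card_univ]
  have hsum : ∀ i, Summable (fun k => c⁻¹ ^ k * r k i) := by
    intro i
    rw [← summable_nat_add_iff N]
    refine Summable.of_nonneg_of_le (f := fun k => ((Fintype.card n) * (b/c) ^ N) * (b / c) ^ k)
      (fun k => mul_nonneg (pow_nonneg (inv_nonneg.mpr hc0.le) _) (hrnn _ i)) ?_ ?_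
    · intro k
      have := hrb (k + N) (Nat.le_add_left N k) i
      calc c⁻¹ ^ (k + N) * r (k + N) i ≤ c⁻¹ ^ (k + N) * ((Fintype.card n) * b ^ (k + N)) := by
            apply mul_le_mul_of_nonneg_left this (pow_nonneg (by positivity) _)
      _ = ((Fintype.card n) * (b/c) ^ N) * (b / c) ^ k := by
            rw [div_pow, div_pow]
            simp only [inv_pow]
            field_simp
            ring
    · exact Summable.mul_left _
        (summable_geometric_of_lt_one (by positivity) (by rw [div_lt_one hc0]; exact hbc))
  set v : n → ℝ := fun i => ∑' k, c⁻¹ ^ k * r k i with hvdef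
  have hv1 : ∀ i, 1 ≤ v i := by
    intro i
    have h5 := Summable.le_tsum (hsum i) 0
      (fun j _ => mul_nonneg (pow_nonneg (inv_nonneg.mpr hc0.le) _) (hrnn _ i))
    simp only [pow_zero, one_mul, hr0 i] at h5
    exact h5
  refine ⟨c, hc0, hc1, v, hv1, fun i => ?_⟩
  have hrow : ∑ j, A i j * v j = c * (v i - 1) := by
    have h1 : ∑ j, A i j * v j = ∑' k, ∑ j, A i j * (c⁻¹ ^ k * r k j) := by
      rw [Summable.tsum_finsetSum (fun j _ => (hsum j).mul_left (A i j))]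
      simp only [hvdef]
      congr 1
      ext j
      rw [tsum_mul_left]
    have h2 : ∀ k : ℕ, ∑ j, A i j * (c⁻¹ ^ k * r k j) = c * (c⁻¹ ^ (k+1) * r (k+1) i) := by
      intro k
      rw [hrsucc k i, Finset.mul_sum, Finset.mul_sum]
      congr 1; ext j
      simp only [inv_pow]
      field_simp
      ring
    rw [h1]
    simp only [h2]
    rw [tsum_mul_left]
    have h3 : ∑' (k : ℕ), c⁻¹ ^ (k + 1) * r (k + 1) i = v i - 1 := by
      have h4 := Summable.tsum_eq_zero_add (hsum i)
      simp only [hr0, pow_zero, one_mul, mul_one] at h4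
      have : v i = 1 + ∑' (k : ℕ), c⁻¹ ^ (k + 1) * r (k + 1) i := h4
      linarith
    rw [h3]
  rw [hrow]
  have := hv1 i
  nlinarith


lemma mulVec_mono {n p : Type*} [Fintype p] (A : Matrix n p ℝ) (hA : ∀ i j, 0 ≤ A i j)
    {x y : p → ℝ} (h : ∀ j, x j ≤ y j) : ∀ i, (A *ᵥ x) i ≤ (A *ᵥ y) i := fun i =>
  Finset.sum_le_sum fun j _ => mul_le_mul_of_nonneg_left (h j) (hA i j)

lemma mulVec_nonneg {n p : Type*} [Fintype p] (A : Matrix n p ℝ) (hA : ∀ i j, 0 ≤ A i j)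
    {x : p → ℝ} (h : ∀ j, 0 ≤ x j) : ∀ i, 0 ≤ (A *ᵥ x) i := fun i =>
  Finset.sum_nonneg fun j _ => mul_nonneg (hA i j) (h j)

lemma pow_entries_nonneg' {n : Type*} [Fintype n] [DecidableEq n]
    (A : Matrix n n ℝ) (hA : ∀ i j, 0 ≤ A i j) (k : ℕ) : ∀ i j, 0 ≤ (A ^ k) i j := by
  induction k with
  | zero => intro i j; by_cases h : i = j <;> simp [Matrix.one_apply, h]
  | succ k ih =>
    intro i j
    rw [pow_succ, Matrix.mul_apply]
    exact Finset.sum_nonneg fun j' _ => mul_nonneg (ih i j') (hA j' j)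

theorem thinned_subinvariant {l m y w : ℕ} (hl : 1 ≤ l) (hm : 1 ≤ m) (hy : 1 ≤ y) (hw : 1 ≤ w)
    (U : Matrix (Fin l) (Fin l) ℝ) (Z : Matrix (Fin m) (Fin m) ℝ)
    (Y : Fin y → Matrix (Fin l) (Fin m) ℝ) (W : Fin w → Matrix (Fin m) (Fin l) ℝ)
    (hU : ∀ a b, 0 ≤ U a b) (hZ : ∀ a b, 0 ≤ Z a b)
    (hY : ∀ i a b, 0 ≤ Y i a b) (hW : ∀ j a b, 0 ≤ W j a b)
    (T : Finset (Fin y × Fin w))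
    {c₁ : ℝ} (hc₁0 : 0 < c₁) (hc₁1 : c₁ < 1) (v : (Fin l ⊕ Fin m) → ℝ)
    (hv1 : ∀ i, 1 ≤ v i)
    (hrow : ∀ i, ∑ j, origMatrix U Z Y W i j * v j ≤ c₁ * v i) :
    ∃ c : ℝ, 0 < c ∧ c < 1 ∧ ∃ u : (Fin l ⊕ (↥T × Fin m)) → ℝ, (∀ i, 0 < u i) ∧
      ∀ i, ∑ j, thinnedSpecialization U Z Y W T i j * u j ≤ c * u i := by
  obtain ⟨c, hc₁c, hc1⟩ : ∃ c : ℝ, c₁ < c ∧ c < 1 := ⟨(c₁ + 1) / 2, by linarith, by linarith⟩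
  have hc0 : 0 < c := hc₁0.trans hc₁c
  set vB : Fin l → ℝ := fun b => v (Sum.inl b) with hvB
  set vC : Fin m → ℝ := fun a => v (Sum.inr a) with hvC
  -- decompose the rows of the original matrix
  have hrowB : ∀ b, (∑ b', U b b' * vB b') + (∑ a, (∑ i, Y i) b a * vC a) ≤ c₁ * vB b := by
    intro b
    have := hrow (Sum.inl b)
    rwa [Fintype.sum_sum_type] at this
  have hrowC : ∀ a, (∑ b, (∑ j, W j) a b * vB b) + (∑ a', Z a a' * vC a') ≤ c₁ * vC a := by
    intro a
    have := hrow (Sum.inr a)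
    rwa [Fintype.sum_sum_type] at this
  have hvB1 : ∀ b, 1 ≤ vB b := fun b => hv1 _
  have hvC1 : ∀ a, 1 ≤ vC a := fun a => hv1 _
  -- W_total and Y_total parts are nonnegative
  have hWt : ∀ a b, (∑ j, W j) a b = ∑ j, W j a b := fun a b => by simp [Matrix.sum_apply]
  have hYt : ∀ b a, (∑ i, Y i) b a = ∑ i, Y i b a := fun b a => by simp [Matrix.sum_apply]
  have hWtot_nonneg : ∀ a, 0 ≤ ∑ b, (∑ j, W j) a b * vB b := fun a =>
    Finset.sum_nonneg fun b _ => mul_nonneg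
      (by rw [hWt]; exact Finset.sum_nonneg fun j _ => hW j a b)
      (le_trans zero_le_one (hvB1 b))
  have hZvC : ∀ a, (Z *ᵥ vC) a ≤ c₁ * vC a := by
    intro a
    have := hrowC a
    have h2 := hWtot_nonneg a
    show ∑ a', Z a a' * vC a' ≤ c₁ * vC a
    linarith
  have hZk : ∀ k a, ((Z ^ k) *ᵥ vC) a ≤ c₁ ^ k * vC a := by
    intro k
    induction k with
    | zero => intro a; simp [Matrix.one_mulVec]
    | succ k ih =>
      intro a
      have h1 : ((Z ^ (k+1)) *ᵥ vC) a = ((Z ^ k) *ᵥ (Z *ᵥ vC)) a := by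
        rw [pow_succ, ← Matrix.mulVec_mulVec]
      rw [h1]
      calc ((Z ^ k) *ᵥ (Z *ᵥ vC)) a ≤ ((Z ^ k) *ᵥ (fun a' => c₁ * vC a')) a :=
        mulVec_mono _ (pow_entries_nonneg' Z hZ k) hZvC a
      _ = c₁ * (((Z ^ k) *ᵥ vC) a) := by
          show ∑ a', (Z^k) a a' * (c₁ * vC a') = c₁ * ∑ a', (Z^k) a a' * vC a'
          rw [Finset.mul_sum]; congr 1; ext a'; ring
      _ ≤ c₁ * (c₁ ^ k * vC a) := mul_le_mul_of_nonneg_left (ih a) hc₁0.le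
      _ = c₁ ^ (k+1) * vC a := by ring
  -- the epsilon slack
  obtain ⟨ε, hε0, hεw⟩ : ∃ ε : ℝ, 0 < ε ∧ (w : ℝ) * ε = c - c₁ :=
    ⟨(c - c₁) / w,
      div_pos (by linarith) (by exact_mod_cast Nat.lt_of_lt_of_le Nat.zero_lt_one hw),
      by field_simp⟩
  -- the auxiliary vectors x j
  set x : Fin w → Fin m → ℝ := fun j a => ((W j) *ᵥ vB) a + ε with hxdef
  have hx_ge : ∀ j a, ε ≤ x j a := by
    intro j a
    have : 0 ≤ ((W j) *ᵥ vB) a :=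
      mulVec_nonneg _ (hW j) (fun b => le_trans zero_le_one (hvB1 b)) a
    simp only [hxdef]; linarith
  have hx_nonneg : ∀ j a, 0 ≤ x j a := fun j a => le_trans hε0.le (hx_ge j a)
  -- sum of the x j
  set X : Fin m → ℝ := fun a => ∑ j, x j a with hXdef
  have hXle : ∀ a, X a ≤ c * vC a - (Z *ᵥ vC) a := by
    intro a
    have h1 : X a = (∑ b, (∑ j, W j) a b * vB b) + (w : ℝ) * ε := by
      simp only [hXdef, hxdef]
      rw [Finset.sum_add_distrib]
      congr 1
      · show (∑ j, ∑ b, W j a b * vB b) = _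
        rw [Finset.sum_comm]
        congr 1; ext b
        rw [hWt, Finset.sum_mul]
      · simp [Finset.sum_const, nsmul_eq_mul]
    have h2 := hrowC a
    have h3 : (c₁ - c) * 1 ≥ (c₁ - c) * vC a :=
      mul_le_mul_of_nonpos_left (hvC1 a) (by linarith)
    have h4 : (Z *ᵥ vC) a = ∑ a', Z a a' * vC a' := rfl
    rw [h1, hεw, h4]
    nlinarith [hvC1 a]
  have hxleX : ∀ j a, x j a ≤ X a := by
    intro j a
    exact Finset.single_le_sum (f := fun j' => x j' a) (fun j' _ => hx_nonneg j' a)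
      (Finset.mem_univ j)
  have hZvC_nonneg : ∀ a, 0 ≤ (Z *ᵥ vC) a :=
    mulVec_nonneg _ hZ (fun a => le_trans zero_le_one (hvC1 a))
  have hxlecvC : ∀ j a, x j a ≤ c * vC a := fun j a =>
    (hxleX j a).trans ((hXle a).trans (by linarith [hZvC_nonneg a]))
  -- bound on Z^k x j
  have hZkx : ∀ j k a, ((Z ^ k) *ᵥ (x j)) a ≤ c * c₁ ^ k * vC a := by
    intro j k a
    calc ((Z ^ k) *ᵥ (x j)) a ≤ ((Z ^ k) *ᵥ (fun a' => c * vC a')) a :=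
      mulVec_mono _ (pow_entries_nonneg' Z hZ k) (hxlecvC j) a
    _ = c * (((Z ^ k) *ᵥ vC) a) := by
        show ∑ a', (Z^k) a a' * (c * vC a') = c * ∑ a', (Z^k) a a' * vC a'
        rw [Finset.mul_sum]; congr 1; ext a'; ring
    _ ≤ c * (c₁ ^ k * vC a) := mul_le_mul_of_nonneg_left (hZk k a) hc0.le
    _ = c * c₁ ^ k * vC a := by ring
  have hZkx_nonneg : ∀ j k a, 0 ≤ ((Z ^ k) *ᵥ (x j)) a := fun j k a =>
    mulVec_nonneg _ (pow_entries_nonneg' Z hZ k) (hx_nonneg j) a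
  -- summability
  have hterm_nonneg : ∀ j a k, 0 ≤ c⁻¹ ^ (k+1) * ((Z ^ k) *ᵥ (x j)) a := fun j a k =>
    mul_nonneg (pow_nonneg (inv_nonneg.mpr hc0.le) _) (hZkx_nonneg j k a)
  have hsum : ∀ j a, Summable (fun k => c⁻¹ ^ (k+1) * ((Z ^ k) *ᵥ (x j)) a) := by
    intro j a
    refine Summable.of_nonneg_of_le (f := fun k => (vC a) * (c₁ / c) ^ k)
      (hterm_nonneg j a) ?_ ?_
    · intro k
      calc c⁻¹ ^ (k+1) * ((Z ^ k) *ᵥ (x j)) a ≤ c⁻¹ ^ (k+1) * (c * c₁ ^ k * vC a) :=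
        mul_le_mul_of_nonneg_left (hZkx j k a) (pow_nonneg (inv_nonneg.mpr hc0.le) _)
      _ = (vC a) * (c₁ / c) ^ k := by
          rw [div_pow]
          simp only [inv_pow]
          field_simp
          ring
    · exact Summable.mul_left _ (summable_geometric_of_lt_one (by positivity)
        (by rw [div_lt_one hc0]; exact hc₁c))
  set s : Fin w → Fin m → ℝ := fun j a => ∑' k, c⁻¹ ^ (k+1) * ((Z ^ k) *ᵥ (x j)) a with hsdef
  have hs_pos : ∀ j a, c⁻¹ * ε ≤ s j a := by
    intro j a
    have h0 := Summable.le_tsum (hsum j a) 0 (fun k _ => hterm_nonneg j a k)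
    simp only [zero_add, pow_one, pow_zero, Matrix.one_mulVec] at h0
    calc c⁻¹ * ε ≤ c⁻¹ * x j a :=
      mul_le_mul_of_nonneg_left (hx_ge j a) (inv_nonneg.mpr hc0.le)
    _ ≤ s j a := h0
  have hs_nonneg : ∀ j a, 0 ≤ s j a := fun j a =>
    le_trans (by positivity) (hs_pos j a)
  -- the key identity  Z s_j = c s_j - x_j
  have hs_eq : ∀ j a, (Z *ᵥ (s j)) a = c * s j a - x j a := by
    intro j a
    have h1 : (Z *ᵥ (s j)) a = ∑' k, c⁻¹ ^ (k+1) * ((Z ^ (k+1)) *ᵥ (x j)) a := by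
      show ∑ a', Z a a' * s j a' = _
      have h2 : ∀ a', Z a a' * s j a' = ∑' k, Z a a' * (c⁻¹ ^ (k+1) * ((Z ^ k) *ᵥ (x j)) a') :=
        fun a' => (tsum_mul_left (a := Z a a')).symm
      simp only [h2]
      rw [← Summable.tsum_finsetSum (fun a' _ => Summable.mul_left _ (hsum j a'))]
      congr 1
      ext k
      have h3 : ∑ a', Z a a' * (c⁻¹ ^ (k+1) * ((Z ^ k) *ᵥ (x j)) a')
          = c⁻¹ ^ (k+1) * ∑ a', Z a a' * ((Z ^ k) *ᵥ (x j)) a' := by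
        rw [Finset.mul_sum]; congr 1; ext a'; ring
      rw [h3]
      congr 1
      show (Z *ᵥ ((Z ^ k) *ᵥ (x j))) a = ((Z ^ (k+1)) *ᵥ (x j)) a
      rw [Matrix.mulVec_mulVec, ← pow_succ']
    have h4 : c * s j a = x j a + ∑' k, c⁻¹ ^ (k+1) * ((Z ^ (k+1)) *ᵥ (x j)) a := by
      have h5 : c * s j a = ∑' k, c⁻¹ ^ k * ((Z ^ k) *ᵥ (x j)) a := by
        rw [hsdef]
        simp only
        rw [← tsum_mul_left]
        congr 1
        ext k
        rw [pow_succ]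
        field_simp
      rw [h5, Summable.tsum_eq_zero_add]
      · simp [Matrix.one_mulVec]
      · have := hsum j a
        refine Summable.of_nonneg_of_le (f := fun k => c * (c⁻¹ ^ (k+1) * ((Z ^ k) *ᵥ (x j)) a))
          (fun k => mul_nonneg (pow_nonneg (inv_nonneg.mpr hc0.le) _) (hZkx_nonneg j k a)) ?_ ?_
        · intro k
          apply le_of_eq
          show _ = c * (c⁻¹ ^ (k + 1) * ((Z ^ k) *ᵥ (x j)) a)
          have hcne : c ≠ 0 := hc0.ne'
          rw [pow_succ]
          field_simp
        · exact this.mul_left c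
    rw [h1]
    linarith [h4]
  -- the sum of the s j is at most vC
  have hS : ∀ a, ∑ j, s j a ≤ vC a := by
    intro a
    have h1 : ∑ j, s j a = ∑' k, c⁻¹ ^ (k+1) * ((Z ^ k) *ᵥ X) a := by
      rw [hsdef]
      simp only
      rw [← Summable.tsum_finsetSum (fun j _ => hsum j a)]
      congr 1
      ext k
      have : ((Z ^ k) *ᵥ X) a = ∑ j, ((Z ^ k) *ᵥ (x j)) a := by
        show ∑ a', (Z ^ k) a a' * X a' = _
        simp only [hXdef, Finset.mul_sum]
        rw [Finset.sum_comm]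
        rfl
      rw [this, Finset.mul_sum]
    rw [h1]
    apply Real.tsum_le_of_sum_range_le
      (fun k => mul_nonneg (pow_nonneg (inv_nonneg.mpr hc0.le) _)
        (mulVec_nonneg _ (pow_entries_nonneg' Z hZ k) (fun a' => le_trans (hε0.le.trans (hx_ge ⟨0, hw⟩ a')) (le_refl _) |>.trans (le_refl _) |> fun _ => Finset.sum_nonneg fun j _ => hx_nonneg j a') a))
    intro K
    have hterm : ∀ k, c⁻¹ ^ (k+1) * ((Z ^ k) *ᵥ X) a ≤
        c⁻¹ ^ k * (((Z ^ k) *ᵥ vC) a) - c⁻¹ ^ (k+1) * (((Z ^ (k+1)) *ᵥ vC) a) := by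
      intro k
      have h2 : ((Z ^ k) *ᵥ X) a ≤ ((Z ^ k) *ᵥ (fun a' => c * vC a' - (Z *ᵥ vC) a')) a :=
        mulVec_mono _ (pow_entries_nonneg' Z hZ k) hXle a
      have h3 : ((Z ^ k) *ᵥ (fun a' => c * vC a' - (Z *ᵥ vC) a')) a
          = c * (((Z ^ k) *ᵥ vC) a) - (((Z ^ (k+1)) *ᵥ vC) a) := by
        have h6 : ((Z ^ (k+1)) *ᵥ vC) a = ∑ a', (Z ^ k) a a' * ((Z *ᵥ vC) a') := by
          show _ = (Z ^ k *ᵥ (Z *ᵥ vC)) a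
          rw [Matrix.mulVec_mulVec, ← pow_succ]
        have h7 : c * (((Z ^ k) *ᵥ vC) a) = ∑ a', (Z ^ k) a a' * (c * vC a') := by
          show c * ∑ a', (Z ^ k) a a' * vC a' = _
          rw [Finset.mul_sum]; congr 1; ext a'; ring
        show ∑ a', (Z ^ k) a a' * (c * vC a' - (Z *ᵥ vC) a') = _
        rw [h6, h7, ← Finset.sum_sub_distrib]
        congr 1; ext a'; ring
      calc c⁻¹ ^ (k+1) * ((Z ^ k) *ᵥ X) a
          ≤ c⁻¹ ^ (k+1) * (c * (((Z ^ k) *ᵥ vC) a) - (((Z ^ (k+1)) *ᵥ vC) a)) :=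
            mul_le_mul_of_nonneg_left (h2.trans_eq h3)
              (pow_nonneg (inv_nonneg.mpr hc0.le) _)
      _ = c⁻¹ ^ k * (((Z ^ k) *ᵥ vC) a) - c⁻¹ ^ (k+1) * (((Z ^ (k+1)) *ᵥ vC) a) := by
          have hcne : c ≠ 0 := hc0.ne'
          rw [pow_succ]
          field_simp
    calc ∑ k ∈ Finset.range K, c⁻¹ ^ (k+1) * ((Z ^ k) *ᵥ X) a
        ≤ ∑ k ∈ Finset.range K,
          (c⁻¹ ^ k * (((Z ^ k) *ᵥ vC) a) - c⁻¹ ^ (k+1) * (((Z ^ (k+1)) *ᵥ vC) a)) :=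
          Finset.sum_le_sum fun k _ => hterm k
    _ = c⁻¹ ^ 0 * (((Z ^ 0) *ᵥ vC) a) - c⁻¹ ^ K * (((Z ^ K) *ᵥ vC) a) := by
        rw [Finset.sum_range_sub' (f := fun k => c⁻¹ ^ k * (((Z ^ k) *ᵥ vC) a))]
    _ ≤ vC a := by
        simp only [pow_zero, one_mul, Matrix.one_mulVec]
        have : 0 ≤ c⁻¹ ^ K * (((Z ^ K) *ᵥ vC) a) :=
          mul_nonneg (pow_nonneg (inv_nonneg.mpr hc0.le) _)
            (mulVec_nonneg _ (pow_entries_nonneg' Z hZ K)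
              (fun a' => le_trans zero_le_one (hvC1 a')) a)
        linarith
  refine ⟨c, hc0, hc1, Sum.elim vB (fun q => s q.1.1.2 q.2), ?_, ?_⟩
  · rintro (b | ⟨q, a⟩)
    · exact lt_of_lt_of_le zero_lt_one (hvB1 b)
    · exact lt_of_lt_of_le (by positivity) (hs_pos q.1.2 a)
  · rintro (b | ⟨q, a⟩)
    · -- top row
      have e1 : ∑ j : Fin l ⊕ (↥T × Fin m),
            thinnedSpecialization U Z Y W T (Sum.inl b) j *
              Sum.elim vB (fun q => s q.1.1.2 q.2) j
          = (∑ b', U b b' * vB b') + ∑ p : ↥T, ∑ a, Y p.1.1 b a * s p.1.2 a := by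
        rw [Fintype.sum_sum_type]
        congr 1
        rw [Fintype.sum_prod_type]
        rfl
      rw [e1]
      have hbound : ∑ p : ↥T, ∑ a, Y p.1.1 b a * s p.1.2 a
          ≤ ∑ a, (∑ i, Y i) b a * vC a := by
        calc ∑ p : ↥T, ∑ a, Y p.1.1 b a * s p.1.2 a
            = ∑ p ∈ T, ∑ a, Y p.1 b a * s p.2 a := by
              rw [← Finset.sum_coe_sort T (fun p => ∑ a, Y p.1 b a * s p.2 a)]
        _ ≤ ∑ p : Fin y × Fin w, ∑ a, Y p.1 b a * s p.2 a :=
            Finset.sum_le_sum_of_subset_of_nonneg (Finset.subset_univ T)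
              (fun p _ _ => Finset.sum_nonneg fun a _ =>
                mul_nonneg (hY _ _ _) (hs_nonneg _ _))
        _ = ∑ i, ∑ a, ∑ j', Y i b a * s j' a := by
            rw [Fintype.sum_prod_type]
            exact Finset.sum_congr rfl fun i _ => Finset.sum_comm
        _ = ∑ a, ∑ i, ∑ j', Y i b a * s j' a := Finset.sum_comm
        _ = ∑ a, ∑ i, Y i b a * (∑ j, s j a) := by
            refine Finset.sum_congr rfl fun a _ => Finset.sum_congr rfl fun i _ => ?_
            rw [Finset.mul_sum]
        _ ≤ ∑ a, (∑ i, Y i) b a * vC a := by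
            apply Finset.sum_le_sum
            intro a _
            rw [hYt, Finset.sum_mul]
            apply Finset.sum_le_sum
            intro i _
            exact mul_le_mul_of_nonneg_left (hS a) (hY i b a)
      have h8 := hrowB b
      have h9 : c₁ * vB b ≤ c * vB b :=
        mul_le_mul_of_nonneg_right hc₁c.le (le_trans zero_le_one (hvB1 b))
      show _ ≤ c * vB b
      linarith
    · -- bottom rows
      set j : Fin w := q.1.2 with hjdef
      have e2 : ∑ j' : Fin l ⊕ (↥T × Fin m),
            thinnedSpecialization U Z Y W T (Sum.inr (q, a)) j' *
              Sum.elim vB (fun q' => s q'.1.1.2 q'.2) j'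
          = ((W j) *ᵥ vB) a + (Z *ᵥ (s j)) a := by
        rw [Fintype.sum_sum_type]
        congr 1
        rw [Fintype.sum_prod_type]
        have e3 : ∀ q' : ↥T, ∑ a' : Fin m,
            thinnedSpecialization U Z Y W T (Sum.inr (q, a)) (Sum.inr (q', a')) *
              s q'.1.2 a' = if q = q' then (Z *ᵥ (s j)) a else 0 := by
          intro q'
          by_cases h : q = q'
          · subst h
            rw [if_pos rfl]
            show ∑ a', (if q = q then Z a a' else 0) * s q.1.2 a' = _
            simp only [if_pos rfl]
            rfl
          · rw [if_neg h]
            show ∑ a', (if q = q' then Z a a' else 0) * s q'.1.2 a' = 0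
            simp [if_neg h]
        calc ∑ q' : ↥T, ∑ a' : Fin m,
              thinnedSpecialization U Z Y W T (Sum.inr (q, a)) (Sum.inr (q', a')) *
                s q'.1.2 a'
            = ∑ q' : ↥T, if q = q' then (Z *ᵥ (s j)) a else 0 := by
              congr 1; ext q'; exact e3 q'
        _ = (Z *ᵥ (s j)) a := by rw [Finset.sum_ite_eq (Finset.univ : Finset ↥T) q]; simp
      rw [e2, hs_eq j a]
      have e4 : ((W j) *ᵥ vB) a = x j a - ε := by simp only [hxdef]; ring
      rw [e4]
      show _ ≤ c * s q.1.2 a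
      linarith


lemma fold_max_le' (s : Multiset ℝ) (c : ℝ) (hc : 0 ≤ c) (h : ∀ x ∈ s, x ≤ c) :
    s.fold max 0 ≤ c := by
  induction s using Multiset.induction with
  | empty => simpa
  | cons a t ih =>
    rw [Multiset.fold_cons_left]
    exact max_le (h a (Multiset.mem_cons_self a t))
      (ih fun x hx => h x (Multiset.mem_cons_of_mem hx))

lemma specRad_lt_one_of_subinv {n : Type*} [Fintype n] [DecidableEq n] [Nonempty n]
    (A : Matrix n n ℝ) (hA : ∀ i j, 0 ≤ A i j) {c : ℝ} (hc1 : c < 1) (u : n → ℝ)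
    (hu : ∀ i, 0 < u i) (hrow : ∀ i, ∑ j, A i j * u j ≤ c * u i) : specRad A < 1 := by
  have key : ∀ t ∈ (Matrix.charpoly (A.map Complex.ofReal)).roots, ‖t‖ ≤ max c 0 := by
    intro t ht
    rw [Polynomial.mem_roots (Matrix.charpoly_monic _).ne_zero, Polynomial.IsRoot,
      eval_charpoly'] at ht
    obtain ⟨v, hv0, hv⟩ := (Matrix.exists_mulVec_eq_zero_iff).mpr ht
    have hv' : (A.map Complex.ofReal) *ᵥ v = t • v := by
      rw [Matrix.sub_mulVec, sub_eq_zero] at hv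
      rw [← hv]
      funext i
      simp [Matrix.scalar, Matrix.mulVec_diagonal]
    -- pick the index maximizing |v i| / u i
    obtain ⟨i₀, -, hi₀⟩ := Finset.exists_max_image (Finset.univ : Finset n)
      (fun i => ‖v i‖ / u i) ⟨Classical.arbitrary n, Finset.mem_univ _⟩
    set t' : ℝ := ‖v i₀‖ / u i₀ with ht'
    have habs : ∀ i, ‖v i‖ ≤ t' * u i := by
      intro i
      have := hi₀ i (Finset.mem_univ i)
      rw [div_le_iff₀ (hu i)] at this
      linarith [this]
    have ht'pos : 0 < t' := by
      obtain ⟨i₁, hi₁⟩ : ∃ i, v i ≠ 0 := Function.ne_iff.mp hv0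
      have h1 : 0 < ‖v i₁‖ / u i₁ :=
        div_pos (by simpa using hi₁) (hu i₁)
      exact lt_of_lt_of_le h1 (hi₀ i₁ (Finset.mem_univ i₁))
    have habsmax : ‖v i₀‖ = t' * u i₀ := by
      rw [ht', div_mul_cancel₀ _ (hu i₀).ne']
    have hrow₀ : ‖t‖ * ‖v i₀‖ ≤ c * (t' * u i₀) := by
      have h2 : ((A.map Complex.ofReal) *ᵥ v) i₀ = t * v i₀ := by rw [hv']; rfl
      calc ‖t‖ * ‖v i₀‖ = ‖t * v i₀‖ := (norm_mul _ _).symm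
      _ = ‖∑ j, (A i₀ j : ℂ) * v j‖ := by rw [← h2]; rfl
      _ ≤ ∑ j, ‖(A i₀ j : ℂ) * v j‖ := norm_sum_le _ _
      _ = ∑ j, A i₀ j * ‖v j‖ := by
          refine Finset.sum_congr rfl fun j _ => ?_
          rw [norm_mul, Complex.norm_real, Real.norm_of_nonneg (hA i₀ j)]
      _ ≤ ∑ j, A i₀ j * (t' * u j) :=
          Finset.sum_le_sum fun j _ => mul_le_mul_of_nonneg_left (habs j) (hA i₀ j)
      _ = t' * ∑ j, A i₀ j * u j := by rw [Finset.mul_sum]; exact Finset.sum_congr rfl fun j _ => by ring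
      _ ≤ t' * (c * u i₀) := mul_le_mul_of_nonneg_left (hrow i₀) ht'pos.le
      _ = c * (t' * u i₀) := by ring
    rw [habsmax] at hrow₀
    have h3 : 0 < t' * u i₀ := mul_pos ht'pos (hu i₀)
    have h4 : ‖t‖ ≤ c := le_of_mul_le_mul_right (by linarith) h3
    exact h4.trans (le_max_left _ _)
  have : specRad A ≤ max c 0 := by
    apply fold_max_le' _ _ (le_max_right _ _)
    intro x hx
    obtain ⟨t, ht, rfl⟩ := Multiset.mem_map.mp hx
    exact key t ht
  exact lt_of_le_of_lt this (max_lt hc1 zero_lt_one)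


theorem global_stability {ι : Type*} [Fintype ι] [DecidableEq ι] [Nonempty ι]
    (A : Matrix ι ι ℝ) (hA : ∀ i j, 0 ≤ A i j)
    {c : ℝ} (hc0 : 0 ≤ c) (hc1 : c < 1) (u : ι → ℝ) (hu : ∀ i, 0 < u i)
    (hrow : ∀ i, ∑ j, A i j * u j ≤ c * u i)
    (X : ι → Set ℝ) (hXne : ∀ i, (X i).Nonempty) (hXcl : ∀ i, IsClosed (X i))
    (G : (ι → ℝ) → (ι → ℝ))
    (hG : ∀ x, (∀ i, x i ∈ X i) → ∀ i, G x i ∈ X i)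
    (hLip : ∀ x y', (∀ i, x i ∈ X i) → (∀ i, y' i ∈ X i) →
      ∀ i, |G x i - G y' i| ≤ ∑ j, A i j * |x j - y' j|) :
    ∃ xstar, (∀ i, xstar i ∈ X i) ∧ G xstar = xstar ∧
      ∀ x0, (∀ i, x0 i ∈ X i) →
        Filter.Tendsto (fun k => G^[k] x0) Filter.atTop (nhds xstar) := by
  set X' : ι → Set ℝ := fun i => {t : ℝ | u i * t ∈ X i} with hX'
  have hX'cl : ∀ i, IsClosed (X' i) := fun i =>
    (hXcl i).preimage (continuous_const.mul continuous_id)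
  set Sset : Set (ι → ℝ) := Set.univ.pi X' with hSset
  have hScl : IsClosed Sset := isClosed_set_pi fun i _ => hX'cl i
  have hmem : ∀ z : ι → ℝ, z ∈ Sset ↔ ∀ i, u i * z i ∈ X i := by
    intro z
    constructor
    · intro h i; exact h i (Set.mem_univ i)
    · intro h i _; exact h i
  haveI : Nonempty ↥Sset := by
    refine ⟨⟨fun i => (hXne i).choose / u i, ?_⟩⟩
    rw [hmem]
    intro i
    rw [mul_div_cancel₀ _ (hu i).ne']
    exact (hXne i).choose_spec
  haveI : CompleteSpace ↥Sset := hScl.completeSpace_coe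
  -- the transformed map
  set φ : (ι → ℝ) → (ι → ℝ) := fun z i => u i * z i with hφ
  have hφmem : ∀ z : ↥Sset, ∀ i, φ z.1 i ∈ X i := fun z i => (hmem z.1).mp z.2 i
  set F : ↥Sset → ↥Sset := fun z => ⟨fun i => G (φ z.1) i / u i, by
    rw [hmem]
    intro i
    rw [mul_div_cancel₀ _ (hu i).ne']
    exact hG (φ z.1) (hφmem z) i⟩ with hF
  have hφF : ∀ z : ↥Sset, φ (F z).1 = G (φ z.1) := by
    intro z
    funext i
    simp only [hφ, hF]
    rw [mul_div_cancel₀ _ (hu i).ne']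
  -- Lipschitz estimate
  have hdist : ∀ z z' : ↥Sset, dist (F z) (F z') ≤ c * dist z z' := by
    intro z z'
    rw [Subtype.dist_eq, Subtype.dist_eq]
    have hd0 : (0:ℝ) ≤ c * dist z.1 z'.1 := mul_nonneg hc0 dist_nonneg
    rw [dist_pi_le_iff hd0]
    intro i
    have hcoord : dist ((F z).1 i) ((F z').1 i)
        = |G (φ z.1) i - G (φ z'.1) i| / u i := by
      simp only [hF, Real.dist_eq, div_sub_div_same, abs_div, abs_of_pos (hu i)]
    rw [hcoord, div_le_iff₀ (hu i)]
    calc |G (φ z.1) i - G (φ z'.1) i|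
        ≤ ∑ j, A i j * |φ z.1 j - φ z'.1 j| :=
          hLip _ _ (hφmem z) (hφmem z') i
    _ = ∑ j, A i j * u j * |z.1 j - z'.1 j| := by
        refine Finset.sum_congr rfl fun j _ => ?_
        simp only [hφ]
        rw [← mul_sub, abs_mul, abs_of_pos (hu j)]
        ring
    _ ≤ ∑ j, A i j * u j * dist z.1 z'.1 := by
        refine Finset.sum_le_sum fun j _ => ?_
        refine mul_le_mul_of_nonneg_left ?_ (mul_nonneg (hA i j) (hu j).le)
        rw [← Real.dist_eq]
        exact dist_le_pi_dist z.1 z'.1 j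
    _ = (∑ j, A i j * u j) * dist z.1 z'.1 := by rw [Finset.sum_mul]
    _ ≤ (c * u i) * dist z.1 z'.1 :=
        mul_le_mul_of_nonneg_right (hrow i) dist_nonneg
    _ = c * dist z.1 z'.1 * u i := by ring
  have hK1 : c.toNNReal < 1 := by
    rw [← Real.toNNReal_one]
    exact (Real.toNNReal_lt_toNNReal_iff zero_lt_one).mpr hc1
  have hLipF : LipschitzWith c.toNNReal F :=
    LipschitzWith.of_dist_le_mul fun z z' => by
      rw [Real.coe_toNNReal c hc0]; exact hdist z z'
  have hC : ContractingWith c.toNNReal F := ⟨hK1, hLipF⟩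
  set zstar := ContractingWith.fixedPoint F hC with hzstar
  have hfix : F zstar = zstar := ContractingWith.fixedPoint_isFixedPt hC
  set xstar : ι → ℝ := φ zstar.1 with hxstar
  have hxstarmem : ∀ i, xstar i ∈ X i := hφmem zstar
  have hGxstar : G xstar = xstar := by
    rw [hxstar, ← hφF zstar, hfix]
  refine ⟨xstar, hxstarmem, hGxstar, ?_⟩
  intro x0 hx0
  set z0 : ↥Sset := ⟨fun i => x0 i / u i, by
    rw [hmem]
    intro i
    rw [mul_div_cancel₀ _ (hu i).ne']
    exact hx0 i⟩ with hz0
  have hφz0 : φ z0.1 = x0 := by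
    funext i
    simp only [hφ, hz0]
    rw [mul_div_cancel₀ _ (hu i).ne']
  have hiter : ∀ k, G^[k] x0 = φ (F^[k] z0).1 := by
    intro k
    induction k with
    | zero => simp [hφz0]
    | succ k ih =>
      rw [Function.iterate_succ_apply', Function.iterate_succ_apply', ih, ← hφF (F^[k] z0)]
  have hcont : Continuous fun z : ↥Sset => φ z.1 :=
    continuous_pi fun i =>
      continuous_const.mul ((continuous_apply i).comp continuous_subtype_val)
  have htend := (hcont.tendsto zstar).comp (ContractingWith.tendsto_iterate_fixedPoint hC z0)
  refine Filter.Tendsto.congr (fun k => (hiter k).symm) ?_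
  exact htend


end AuxProof

/-- dynamic stability under thinned specialization.  If the stability matrix
`Λ = M` is nonnegative with `ρ(Λ) < 1`, then any thinned specialization `Λ̂_T` satisfies
`ρ(Λ̂_T) < 1`, and any network map `G` on the thinned index set whose variation is bounded
by `Λ̂_T` is globally stable. -/
theorem intrinsic_stability_preserved_by_thinnedSpecialization
    {l m y w : ℕ} (hl : 1 ≤ l) (hm : 1 ≤ m) (hy : 1 ≤ y) (hw : 1 ≤ w)
    (U : Matrix (Fin l) (Fin l) ℝ) (Z : Matrix (Fin m) (Fin m) ℝ)
    (Y : Fin y → Matrix (Fin l) (Fin m) ℝ) (W : Fin w → Matrix (Fin m) (Fin l) ℝ)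
    (hU : ∀ a b, 0 ≤ U a b) (hZ : ∀ a b, 0 ≤ Z a b)
    (hY : ∀ i a b, 0 ≤ Y i a b) (hW : ∀ j a b, 0 ≤ W j a b)
    (hρ : specRad (origMatrix U Z Y W) < 1)
    (T : Finset (Fin y × Fin w))
    (X : (Fin l ⊕ (↥T × Fin m)) → Set ℝ)
    (hXne : ∀ i, (X i).Nonempty) (hXcl : ∀ i, IsClosed (X i))
    (G : ((Fin l ⊕ (↥T × Fin m)) → ℝ) → ((Fin l ⊕ (↥T × Fin m)) → ℝ))
    (hG : ∀ x, (∀ i, x i ∈ X i) → ∀ i, G x i ∈ X i)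
    (hLip : ∀ x y', (∀ i, x i ∈ X i) → (∀ i, y' i ∈ X i) →
      ∀ i, |G x i - G y' i| ≤ ∑ j, thinnedSpecialization U Z Y W T i j * |x j - y' j|) :
    specRad (thinnedSpecialization U Z Y W T) < 1
    ∧ ∃ xstar, (∀ i, xstar i ∈ X i) ∧ G xstar = xstar ∧
        ∀ x0, (∀ i, x0 i ∈ X i) →
          Filter.Tendsto (fun k => G^[k] x0) Filter.atTop (nhds xstar) := by
  haveI hne1 : Nonempty (Fin l ⊕ Fin m) := ⟨Sum.inl ⟨0, hl⟩⟩
  haveI hne2 : Nonempty (Fin l ⊕ (↥T × Fin m)) := ⟨Sum.inl ⟨0, hl⟩⟩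
  have hM : ∀ i j, 0 ≤ origMatrix U Z Y W i j := by
    rintro (a | a) (b | b)
    · exact hU a b
    · show 0 ≤ (∑ i, Y i) a b
      rw [Matrix.sum_apply]
      exact Finset.sum_nonneg fun i _ => hY i a b
    · show 0 ≤ (∑ j, W j) a b
      rw [Matrix.sum_apply]
      exact Finset.sum_nonneg fun j _ => hW j a b
    · exact hZ a b
  have hAnn : ∀ i j, 0 ≤ thinnedSpecialization U Z Y W T i j := by
    rintro (a | ⟨p, r'⟩) (b | ⟨q, c'⟩)
    · exact hU a b
    · exact hY _ _ _
    · exact hW _ _ _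
    · show (0:ℝ) ≤ if p = q then Z r' c' else 0
      split
      · exact hZ _ _
      · exact le_rfl
  obtain ⟨c₁, hc₁0, hc₁1, v, hv1, hrowv⟩ := exists_subinvariant (origMatrix U Z Y W) hM hρ
  obtain ⟨c, hc0, hc1, u, hu, hurow⟩ :=
    thinned_subinvariant hl hm hy hw U Z Y W hU hZ hY hW T hc₁0 hc₁1 v hv1 hrowv
  refine ⟨specRad_lt_one_of_subinv _ hAnn hc1 u hu hurow, ?_⟩
  exact global_stability _ hAnn hc0.le hc1 u hu hurow X hXne hXcl G hG hLip
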